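/- The matrices { (N_T N_R N_t)^{−1/2} X_Θ : Θ ∈ G } form an orthonormal system with respect to the Frobenius inner product: for all Θ, Θ' ∈ G, ⟨X_{Θ'}, X_Θ⟩ = Tr(X_{Θ'}^* X_Θ) = N_T·N_R·N_t if Θ' = Θ, and 0 otherwise. -/

import Mathlib

open MeasureTheory ProbabilityTheory Complex
open scoped ENNReal Matrix

noncomputable section

namespace MIMO

/-- Squared ℓ²-norm of a complex vector. -/
def l2normSq {ι : Type*} [Fintype ι] (x : ι → ℂ) : ℝ := ∑ i, ‖x i‖ ^ 2

/-- ℓ²-norm of a complex vector. -/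
def l2norm {ι : Type*} [Fintype ι] (x : ι → ℂ) : ℝ := Real.sqrt (l2normSq x)

/-- ℓ¹-norm of a complex vector. -/
def l1norm {ι : Type*} [Fintype ι] (x : ι → ℂ) : ℝ := ∑ i, ‖x i‖

/-- Hermitian inner product, conjugate-linear in the first argument. -/
def cInner {ι : Type*} [Fintype ι] (x y : ι → ℂ) : ℂ := ∑ i, (starRingEnd ℂ) (x i) * y i

/-- Spectral norm (ℓ² → ℓ² operator norm) of a complex matrix. -/
def specNorm {m n : Type*} [Fintype m] [Fintype n] (A : Matrix m n ℂ) : ℝ :=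
  sSup ((fun x => l2norm (A.mulVec x)) '' {x | l2norm x ≤ 1})

/-- Frobenius norm of a complex matrix. -/
def frobNorm {m n : Type*} [Fintype m] [Fintype n] (A : Matrix m n ℂ) : ℝ :=
  Real.sqrt (∑ i, ∑ j, ‖A i j‖ ^ 2)

/-- The standard complex Gaussian measure on ℂ: real and imaginary parts are
independent real centered Gaussians of variance 1/2. -/
def stdCGaussian : Measure ℂ :=
  Measure.map (⇑Complex.measurableEquivRealProd.symm)
    ((gaussianReal 0 (1/2)).prod (gaussianReal 0 (1/2)))

/-- A mean-zero complex Gaussian measure of variance σ² on ℂ. -/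
def cGaussian (σ : ℝ) : Measure ℂ :=
  Measure.map (fun z : ℂ => (σ : ℂ) * z) stdCGaussian

/-- Complex Gaussian noise (independent entries, variance σ²). -/
def noiseMeasure (ι : Type*) [Fintype ι] (σ : ℝ) : Measure (ι → ℂ) :=
  Measure.pi (fun _ => cGaussian σ)

/-- The Steinhaus (uniform) distribution on the complex unit circle. -/
def steinhaus : Measure ℂ :=
  Measure.map (fun θ : ℝ => Complex.exp (θ * Complex.I))
    ((ENNReal.ofReal (2 * Real.pi))⁻¹ • volume.restrict (Set.Ico (0:ℝ) (2 * Real.pi)))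

/-- A Steinhaus vector: independent entries uniform on the complex unit circle. -/
def steinhausPi (ι : Type*) [Fintype ι] : Measure (ι → ℂ) := Measure.pi (fun _ => steinhaus)

/-- The joint distribution of the NT independent standard complex Gaussian signals in ℂ^{Nt}. -/
def signalMeasure (NT Nt : ℕ) : Measure (Fin NT → Fin Nt → ℂ) :=
  Measure.pi (fun _ => Measure.pi (fun _ => stdCGaussian))

/-- The angle–delay–Doppler parameter grid `[N_T N_R] × [N_t] × [N_t]`. -/
abbrev Grid (NT NR Nt : ℕ) := Fin (NT * NR) × Fin Nt × Fin Nt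

/-- `e^{2πi x}`. -/
def ePhase (x : ℝ) : ℂ := Complex.exp (((2 * Real.pi * x : ℝ) : ℂ) * Complex.I)

/-- The modulated circulant shift `M_f T_τ` applied to a signal:
`(M_f T_τ s)_k = e^{2πi f (k-1)/N_t} s_{k-τ}` (1-based indices; `k.val = k-1`). -/
def modShift (Nt : ℕ) [NeZero Nt] (τ f : ℕ) (s : Fin Nt → ℂ) (k : Fin Nt) : ℂ :=
  ePhase ((f : ℝ) * (k.1 : ℝ) / (Nt : ℝ)) * s (k - (Fin.ofNat Nt τ))

/-- The column `A_Θ` of the MIMO measurement matrix, `Θ = (β,τ,f)`;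
its `j`-th length-`N_t` block is
`e^{2πi β (j-1)/N_R} ∑_i e^{2πi β (i-1)/(N_T N_R)} M_f T_τ s_i`. -/
def colA (NT NR Nt : ℕ) [NeZero Nt] (sg : Fin NT → Fin Nt → ℂ)
    (Θ : Grid NT NR Nt) (p : Fin NR × Fin Nt) : ℂ :=
  ePhase (((Θ.1.1 : ℝ) + 1) * (p.1.1 : ℝ) / (NR : ℝ)) *
    ∑ i : Fin NT, ePhase (((Θ.1.1 : ℝ) + 1) * (i.1 : ℝ) / ((NT : ℝ) * (NR : ℝ))) *
      modShift Nt (Θ.2.1.1 + 1) (Θ.2.2.1 + 1) (sg i) p.2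

/-- The column `Ã_Θ = (N_T N_R N_t)^{-1/2} A_Θ` of the scaled measurement matrix. -/
def colAt (NT NR Nt : ℕ) [NeZero Nt] (sg : Fin NT → Fin Nt → ℂ)
    (Θ : Grid NT NR Nt) (p : Fin NR × Fin Nt) : ℂ :=
  ((Real.sqrt ((NT : ℝ) * (NR : ℝ) * (Nt : ℝ)) : ℂ))⁻¹ * colA NT NR Nt sg Θ p

/-- The MIMO measurement matrix `A`. -/
def Amat (NT NR Nt : ℕ) [NeZero Nt] (sg : Fin NT → Fin Nt → ℂ) :
    Matrix (Fin NR × Fin Nt) (Grid NT NR Nt) ℂ := fun p Θ => colA NT NR Nt sg Θ p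

/-- The scaled MIMO measurement matrix `Ã = (N_T N_R N_t)^{-1/2} A`. -/
def Atil (NT NR Nt : ℕ) [NeZero Nt] (sg : Fin NT → Fin Nt → ℂ) :
    Matrix (Fin NR × Fin Nt) (Grid NT NR Nt) ℂ := fun p Θ => colAt NT NR Nt sg Θ p

/-- The Gram matrix `Ã_T^* Ã_T` of the columns of `Ã` indexed by a subset `T`. -/
def gram (NT NR Nt : ℕ) [NeZero Nt] (sg : Fin NT → Fin Nt → ℂ)
    (T : Finset (Grid NT NR Nt)) : Matrix {Θ // Θ ∈ T} {Θ // Θ ∈ T} ℂ :=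
  fun Θ Θ' => cInner (colAt NT NR Nt sg Θ.1) (colAt NT NR Nt sg Θ'.1)

/-- `S_{[β]}`: the elements of `S` whose angle parameter is equivalent to `β`
(equivalent ⟺ difference divisible by `N_R`). -/
def classOf (NT NR Nt : ℕ) (S : Finset (Grid NT NR Nt)) (β : Fin (NT * NR)) :
    Finset (Grid NT NR Nt) :=
  S.filter (fun Θ => ((Θ.1.1 : ℤ) - (β.1 : ℤ)) % (NR : ℤ) = 0)

/-- A support set `S` is `η`-balanced if `|S_{[β]}| ≤ η |S| / N_R` for every angle class. -/
def IsBalanced (NT NR Nt : ℕ) (S : Finset (Grid NT NR Nt)) (η : ℝ) : Prop :=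
  ∀ β : Fin (NT * NR), ((classOf NT NR Nt S β).card : ℝ) ≤ η * (S.card : ℝ) / (NR : ℝ)

/-- The restricted isometry constant `δ_s(A)`: the smallest `δ ≥ 0` such that
`(1-δ)‖x‖₂² ≤ ‖Ax‖₂² ≤ (1+δ)‖x‖₂²` for all `s`-sparse `x`. -/
def ripConst {m n : Type*} [Fintype m] [Fintype n] (s : ℕ) (A : Matrix m n ℂ) : ℝ :=
  sInf {δ : ℝ | 0 ≤ δ ∧ ∀ x : n → ℂ, (Function.support x).ncard ≤ s →
    (1 - δ) * l2normSq x ≤ l2normSq (A.mulVec x) ∧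
      l2normSq (A.mulVec x) ≤ (1 + δ) * l2normSq x}


/-- The matrix `X_Θ`, whose `(i,j)`-th `N_t × N_t` block is
`e^{2πi β(i-1)/N_R} e^{2πi β(j-1)/(N_T N_R)} M_f T_τ`. -/
def Xmat (NT NR Nt : ℕ) [NeZero Nt] (Θ : Grid NT NR Nt) :
    Matrix (Fin NR × Fin Nt) (Fin NT × Fin Nt) ℂ :=
  fun p q =>
    ePhase (((Θ.1.1 : ℝ) + 1) * (p.1.1 : ℝ) / (NR : ℝ)) *
    ePhase (((Θ.1.1 : ℝ) + 1) * (q.1.1 : ℝ) / ((NT : ℝ) * (NR : ℝ))) *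
    (ePhase (((Θ.2.2.1 : ℝ) + 1) * (p.2.1 : ℝ) / (Nt : ℝ)) *
      (if q.2 = p.2 - (Fin.ofNat Nt (Θ.2.1.1 + 1 : ℕ)) then 1 else 0))


lemma ePhase_add (x y : ℝ) : ePhase (x + y) = ePhase x * ePhase y := by
  unfold ePhase; rw [← Complex.exp_add]; congr 1; push_cast; ring

lemma conj_ePhase (x : ℝ) : (starRingEnd ℂ) (ePhase x) = ePhase (-x) := by
  unfold ePhase
  rw [← Complex.exp_conj]
  congr 1
  rw [map_mul, Complex.conj_ofReal, Complex.conj_I]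
  push_cast
  ring

lemma ePhase_int (m : ℤ) : ePhase m = 1 := by
  unfold ePhase
  rw [Complex.exp_eq_one_iff]
  exact ⟨m, by push_cast; ring⟩

lemma ePhase_zero : ePhase 0 = 1 := by simpa using ePhase_int 0

lemma sum_ePhase (n : ℕ) [NeZero n] (a : ℤ) :
    ∑ k : Fin n, ePhase ((a : ℝ) * (k.1 : ℝ) / n) = if (n : ℤ) ∣ a then (n : ℂ) else 0 := by
  have hn : (n:ℝ) ≠ 0 := Nat.cast_ne_zero.2 (NeZero.ne n)
  set ω : ℂ := ePhase ((a : ℝ) / n) with hω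
  have hk : ∀ k : ℕ, ePhase ((a:ℝ) * k / n) = ω ^ k := by
    intro k
    rw [hω]
    unfold ePhase
    rw [← Complex.exp_nat_mul]
    congr 1
    push_cast
    ring
  have hωn : ω ^ n = 1 := by
    have h1 := hk n
    have h2 : (a:ℝ) * n / n = ((a:ℤ):ℝ) := by field_simp
    rw [h2, ePhase_int] at h1
    exact h1.symm
  have hrange : ∑ k : Fin n, ePhase ((a : ℝ) * (k.1 : ℝ) / n) = ∑ k ∈ Finset.range n, ω ^ k := by
    rw [Fin.sum_univ_eq_sum_range (fun k => ePhase ((a:ℝ) * k / n))]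
    exact Finset.sum_congr rfl fun k _ => hk k
  rw [hrange]
  by_cases hd : (n:ℤ) ∣ a
  · obtain ⟨b, hb⟩ := hd
    have hω1 : ω = 1 := by
      rw [hω]
      have : (a:ℝ)/n = ((b:ℤ):ℝ) := by rw [hb]; push_cast; field_simp
      rw [this, ePhase_int]
    rw [if_pos ⟨b, hb⟩]
    simp [hω1]
  · have hω1 : ω ≠ 1 := by
      intro h
      apply hd
      rw [hω] at h
      unfold ePhase at h
      rw [Complex.exp_eq_one_iff] at h
      obtain ⟨m, hm⟩ := h
      have hπ : (Real.pi : ℂ) ≠ 0 := Complex.ofReal_ne_zero.2 Real.pi_ne_zero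
      have hc : (2:ℂ) * Real.pi * Complex.I ≠ 0 := by
        simp [hπ, Real.pi_ne_zero, Complex.I_ne_zero]
      have hnC : (n:ℂ) ≠ 0 := Nat.cast_ne_zero.2 (NeZero.ne n)
      have h2 : (a:ℂ) = m * n := by
        push_cast at hm
        field_simp at hm
        have h' : ((2:ℂ) * Real.pi * Complex.I) * a = ((2:ℂ) * Real.pi * Complex.I) * (m * n) := by
          linear_combination ((2:ℂ) * Real.pi * Complex.I) * hm
        exact mul_left_cancel₀ hc h'
      have h5 : a = m * n := by exact_mod_cast h2
      exact ⟨m, by rw [h5, Int.mul_comm]⟩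
    rw [geom_sum_eq hω1, hωn]
    simp [hd]

lemma succ_mod_inj {n a b : ℕ} (ha : a < n) (hb : b < n) (h : (a+1) % n = (b+1) % n) : a = b := by
  rcases Nat.lt_or_ge (a+1) n with h1 | h1 <;> rcases Nat.lt_or_ge (b+1) n with h2 | h2
  · rw [Nat.mod_eq_of_lt h1, Nat.mod_eq_of_lt h2] at h; omega
  · have hb1 : b + 1 = n := by omega
    rw [Nat.mod_eq_of_lt h1, hb1, Nat.mod_self] at h; omega
  · have ha1 : a + 1 = n := by omega
    rw [ha1, Nat.mod_self, Nat.mod_eq_of_lt h2] at h; omega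
  · omega

lemma int_dvd_small {n a : ℤ} (h : n ∣ a) (h2 : |a| < n) : a = 0 := by
  by_contra ha
  have h3 : n ∣ |a| := (dvd_abs n a).mpr h
  have h4 := Int.le_of_dvd (abs_pos.mpr ha) h3
  linarith

lemma triple_factor {ι₁ ι₂ ι₃ : Type*} [Fintype ι₁] [Fintype ι₂] [Fintype ι₃]
    (A : ι₁ → ℂ) (B : ι₂ → ℂ) (C : ι₃ → ℂ) (e : ℂ) :
    ∑ i, ∑ j, ∑ k, A i * B j * C k * e = (∑ i, A i) * (∑ j, B j) * (∑ k, C k) * e := by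
  have h1 : ∀ (i : ι₁) (j : ι₂), ∑ k, A i * B j * C k * e = A i * B j * (∑ k, C k) * e := by
    intro i j
    calc ∑ k, A i * B j * C k * e = ∑ k, (A i * B j * e) * C k :=
          Finset.sum_congr rfl fun k _ => by ring
      _ = (A i * B j * e) * ∑ k, C k := (Finset.mul_sum _ _ _).symm
      _ = A i * B j * (∑ k, C k) * e := by ring
  have h2 : ∀ i : ι₁, ∑ j, A i * B j * (∑ k, C k) * e
      = A i * (∑ j, B j) * (∑ k, C k) * e := by
    intro i
    calc ∑ j, A i * B j * (∑ k, C k) * e = ∑ j, (A i * (∑ k, C k) * e) * B j :=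
          Finset.sum_congr rfl fun j _ => by ring
      _ = (A i * (∑ k, C k) * e) * ∑ j, B j := (Finset.mul_sum _ _ _).symm
      _ = A i * (∑ j, B j) * (∑ k, C k) * e := by ring
  calc ∑ i, ∑ j, ∑ k, A i * B j * C k * e
      = ∑ i, A i * (∑ j, B j) * (∑ k, C k) * e := by
        refine Finset.sum_congr rfl fun i _ => ?_
        rw [Finset.sum_congr rfl fun j _ => h1 i j]
        exact h2 i
    _ = ∑ i, ((∑ j, B j) * (∑ k, C k) * e) * A i :=
          Finset.sum_congr rfl fun i _ => by ring
    _ = ((∑ j, B j) * (∑ k, C k) * e) * ∑ i, A i := (Finset.mul_sum _ _ _).symm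
    _ = (∑ i, A i) * (∑ j, B j) * (∑ k, C k) * e := by ring

/-- the matrices `(N_T N_R N_t)^{-1/2} X_Θ` form an orthonormal system
w.r.t. the Frobenius inner product (Lemma A.1). -/
theorem stmt14 (NT NR Nt : ℕ) [NeZero NT] [NeZero NR] [NeZero Nt]
    (Θ Θ' : Grid NT NR Nt) :
    Matrix.trace ((Xmat NT NR Nt Θ')ᴴ * Xmat NT NR Nt Θ) =
      if Θ' = Θ then ((NT * NR * Nt : ℕ) : ℂ) else 0 := by
  obtain ⟨β, τ, f⟩ := Θ
  obtain ⟨β', τ', f'⟩ := Θ'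
  set Δβ : ℤ := (β.1 : ℤ) - β'.1 with hΔβ
  set Δf : ℤ := (f.1 : ℤ) - f'.1 with hΔf
  have hpt : ∀ (p1 : Fin NR) (q1 : Fin NT) (p2 : Fin Nt) (q2 : Fin Nt),
      star (Xmat NT NR Nt (β', τ', f') (p1, p2) (q1, q2)) *
        Xmat NT NR Nt (β, τ, f) (p1, p2) (q1, q2) =
      ePhase ((Δβ : ℝ) * (p1.1 : ℝ) / NR) * ePhase ((Δβ : ℝ) * (q1.1 : ℝ) / ((NT : ℝ) * NR)) *
        (ePhase ((Δf : ℝ) * (p2.1 : ℝ) / Nt) *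
          ((if q2 = p2 - (Fin.ofNat Nt (τ'.1 + 1 : ℕ)) then (1:ℂ) else 0) *
            (if q2 = p2 - (Fin.ofNat Nt (τ.1 + 1 : ℕ)) then (1:ℂ) else 0))) := by
    intro p1 q1 p2 q2
    have e1 : ePhase ((Δβ:ℝ) * (p1.1:ℝ) / NR)
        = ePhase (-(((β'.1:ℝ)+1) * (p1.1:ℝ) / NR)) * ePhase (((β.1:ℝ)+1) * (p1.1:ℝ) / NR) := by
      rw [← ePhase_add]; congr 1; rw [hΔβ]; push_cast; ring
    have e2 : ePhase ((Δβ:ℝ) * (q1.1:ℝ) / ((NT:ℝ) * NR))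
        = ePhase (-(((β'.1:ℝ)+1) * (q1.1:ℝ) / ((NT:ℝ) * NR))) *
            ePhase (((β.1:ℝ)+1) * (q1.1:ℝ) / ((NT:ℝ) * NR)) := by
      rw [← ePhase_add]; congr 1; rw [hΔβ]; push_cast; ring
    have e3 : ePhase ((Δf:ℝ) * (p2.1:ℝ) / Nt)
        = ePhase (-(((f'.1:ℝ)+1) * (p2.1:ℝ) / Nt)) * ePhase (((f.1:ℝ)+1) * (p2.1:ℝ) / Nt) := by
      rw [← ePhase_add]; congr 1; rw [hΔf]; push_cast; ring
    show (starRingEnd ℂ) _ * _ = _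
    simp only [Xmat, map_mul, conj_ePhase, apply_ite (starRingEnd ℂ), map_one, map_zero]
    rw [e1, e2, e3]
    ring
  have hq2sum : ∀ p2 : Fin Nt, (∑ q2 : Fin Nt,
      ((if q2 = p2 - (Fin.ofNat Nt (τ'.1 + 1 : ℕ)) then (1:ℂ) else 0) *
        (if q2 = p2 - (Fin.ofNat Nt (τ.1 + 1 : ℕ)) then (1:ℂ) else 0)))
      = if τ' = τ then 1 else 0 := by
    intro p2
    by_cases h : τ' = τ
    · subst h
      rw [if_pos rfl]
      have h1 : ∀ q2 : Fin Nt,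
          ((if q2 = p2 - (Fin.ofNat Nt (τ'.1 + 1 : ℕ)) then (1:ℂ) else 0) *
            (if q2 = p2 - (Fin.ofNat Nt (τ'.1 + 1 : ℕ)) then (1:ℂ) else 0))
          = if q2 = p2 - (Fin.ofNat Nt (τ'.1 + 1 : ℕ)) then (1:ℂ) else 0 := by
        intro q2; split_ifs <;> simp
      rw [Finset.sum_congr rfl fun q2 _ => h1 q2]
      simp
    · rw [if_neg h]
      have hne : p2 - (Fin.ofNat Nt (τ'.1 + 1 : ℕ)) ≠ p2 - (Fin.ofNat Nt (τ.1 + 1 : ℕ)) := by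
        intro hEq
        apply h
        have h2 : (Fin.ofNat Nt (τ'.1 + 1 : ℕ)) = (Fin.ofNat Nt (τ.1 + 1 : ℕ)) := by
          exact sub_right_injective hEq
        have h3 := congrArg Fin.val h2
        simp only [Fin.val_ofNat] at h3
        exact Fin.ext (succ_mod_inj τ'.2 τ.2 h3)
      refine Finset.sum_eq_zero fun q2 _ => ?_
      split_ifs with h1 h2
      · exact absurd (h1.symm.trans h2) hne
      · ring
      · ring
      · ring
  have htr : Matrix.trace ((Xmat NT NR Nt (β', τ', f'))ᴴ * Xmat NT NR Nt (β, τ, f))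
      = ∑ p1 : Fin NR, ∑ q1 : Fin NT, ∑ p2 : Fin Nt, ∑ q2 : Fin Nt,
          star (Xmat NT NR Nt (β', τ', f') (p1, p2) (q1, q2)) *
            Xmat NT NR Nt (β, τ, f) (p1, p2) (q1, q2) := by
    rw [Matrix.trace]
    simp only [Matrix.diag, Matrix.mul_apply, Matrix.conjTranspose_apply]
    rw [Finset.sum_comm]
    rw [Fintype.sum_prod_type]
    refine Finset.sum_congr rfl fun p _ => ?_
    rw [Finset.sum_comm]
    rw [Fintype.sum_prod_type]
    refine Finset.sum_congr rfl fun q1 _ => ?_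
    rw [Finset.sum_comm]
  rw [htr]
  have hstep : (∑ p1 : Fin NR, ∑ q1 : Fin NT, ∑ p2 : Fin Nt, ∑ q2 : Fin Nt,
      star (Xmat NT NR Nt (β', τ', f') (p1, p2) (q1, q2)) *
        Xmat NT NR Nt (β, τ, f) (p1, p2) (q1, q2))
      = (∑ p1 : Fin NR, ePhase ((Δβ : ℝ) * (p1.1 : ℝ) / NR)) *
        (∑ q1 : Fin NT, ePhase ((Δβ : ℝ) * (q1.1 : ℝ) / ((NT : ℝ) * NR))) *
        (∑ p2 : Fin Nt, ePhase ((Δf : ℝ) * (p2.1 : ℝ) / Nt)) *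
        (if τ' = τ then 1 else 0) := by
    have hmid : ∀ (p1 : Fin NR) (q1 : Fin NT) (p2 : Fin Nt),
        (∑ q2 : Fin Nt, star (Xmat NT NR Nt (β', τ', f') (p1, p2) (q1, q2)) *
          Xmat NT NR Nt (β, τ, f) (p1, p2) (q1, q2))
        = ePhase ((Δβ : ℝ) * (p1.1 : ℝ) / NR) *
            ePhase ((Δβ : ℝ) * (q1.1 : ℝ) / ((NT : ℝ) * NR)) *
            ePhase ((Δf : ℝ) * (p2.1 : ℝ) / Nt) * (if τ' = τ then 1 else 0) := by
      intro p1 q1 p2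
      rw [Finset.sum_congr rfl fun q2 _ => hpt p1 q1 p2 q2]
      rw [← Finset.mul_sum, ← Finset.mul_sum, hq2sum p2]
      ring
    simp only [hmid]
    exact triple_factor (fun p1 : Fin NR => ePhase ((Δβ : ℝ) * (p1.1 : ℝ) / NR))
      (fun q1 : Fin NT => ePhase ((Δβ : ℝ) * (q1.1 : ℝ) / ((NT : ℝ) * NR)))
      (fun p2 : Fin Nt => ePhase ((Δf : ℝ) * (p2.1 : ℝ) / Nt))
      (if τ' = τ then 1 else 0)
  rw [hstep]
  by_cases hβ : β' = β
  · by_cases hτ : τ' = τ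
    · by_cases hf : f' = f
      · rw [if_pos (show ((β', τ', f') : Grid NT NR Nt) = (β, τ, f) by rw [hβ, hτ, hf])]
        have hβ0 : Δβ = 0 := by rw [hΔβ, hβ]; ring
        have hf0 : Δf = 0 := by rw [hΔf, hf]; ring
        rw [hβ0, hf0, if_pos hτ]
        have hs1 : (∑ p1 : Fin NR, ePhase (((0:ℤ) : ℝ) * (p1.1 : ℝ) / NR)) = (NR : ℂ) := by
          rw [sum_ePhase NR 0]; simp
        have hs3 : (∑ p2 : Fin Nt, ePhase (((0:ℤ) : ℝ) * (p2.1 : ℝ) / Nt)) = (Nt : ℂ) := by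
          rw [sum_ePhase Nt 0]; simp
        have hs2 : (∑ q1 : Fin NT, ePhase (((0:ℤ) : ℝ) * (q1.1 : ℝ) / ((NT : ℝ) * NR))) = (NT : ℂ) := by
          have : ∀ q1 : Fin NT, ePhase (((0:ℤ) : ℝ) * (q1.1 : ℝ) / ((NT : ℝ) * NR)) = 1 := by
            intro q1
            have h0 : ((0:ℤ) : ℝ) * (q1.1 : ℝ) / ((NT : ℝ) * NR) = 0 := by norm_num
            rw [h0, ePhase_zero]
          rw [Finset.sum_congr rfl fun q1 _ => this q1]
          simp
        rw [hs1, hs2, hs3]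
        push_cast
        ring
      · rw [if_neg (show ¬(((β', τ', f') : Grid NT NR Nt) = (β, τ, f)) from
          fun hEq => hf (congrArg (fun x : Grid NT NR Nt => x.2.2) hEq))]
        have hnd : ¬ (Nt : ℤ) ∣ Δf := by
          intro hdvd
          apply hf
          have habs : |Δf| < (Nt : ℤ) := by
            rw [hΔf, abs_lt]
            have := f.2
            have := f'.2
            omega
          have h0 : Δf = 0 := int_dvd_small hdvd habs
          rw [hΔf] at h0
          exact Fin.ext (by omega)
        rw [sum_ePhase Nt Δf, if_neg hnd]
        ring
    · rw [if_neg (show ¬(((β', τ', f') : Grid NT NR Nt) = (β, τ, f)) from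
        fun hEq => hτ (congrArg (fun x : Grid NT NR Nt => x.2.1) hEq)), if_neg hτ]
      ring
  · rw [if_neg (show ¬(((β', τ', f') : Grid NT NR Nt) = (β, τ, f)) from
      fun hEq => hβ (congrArg (fun x : Grid NT NR Nt => x.1) hEq))]
    by_cases hdvd : (NR : ℤ) ∣ Δβ
    · obtain ⟨cc, hcc⟩ := hdvd
      have hS2 : (∑ q1 : Fin NT, ePhase ((Δβ : ℝ) * (q1.1 : ℝ) / ((NT : ℝ) * NR))) = 0 := by
        have hNR : (NR : ℝ) ≠ 0 := Nat.cast_ne_zero.2 (NeZero.ne NR)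
        have hNT : (NT : ℝ) ≠ 0 := Nat.cast_ne_zero.2 (NeZero.ne NT)
        have harg : ∀ q1 : Fin NT, (Δβ : ℝ) * (q1.1 : ℝ) / ((NT : ℝ) * NR)
            = (cc : ℝ) * (q1.1 : ℝ) / NT := by
          intro q1
          rw [hcc]
          push_cast
          field_simp
        rw [Finset.sum_congr rfl fun q1 _ => by rw [harg q1]]
        rw [sum_ePhase NT cc, if_neg]
        intro hd2
        obtain ⟨d, hd⟩ := hd2
        apply hβ
        have habs : |Δβ| < ((NT * NR : ℕ) : ℤ) := by
          rw [hΔβ, abs_lt]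
          have := β.2
          have := β'.2
          push_cast
          omega
        have hdvd2 : ((NT * NR : ℕ) : ℤ) ∣ Δβ := ⟨d, by rw [hcc, hd]; push_cast; ring⟩
        have h0 : Δβ = 0 := int_dvd_small hdvd2 habs
        rw [hΔβ] at h0
        exact Fin.ext (by omega)
      rw [hS2]
      ring
    · rw [sum_ePhase NR Δβ, if_neg hdvd]
      ring


end MIMO
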